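/- Sampling with replacement uniformly from a set of n elements (independently, a Binomial(n,p)-distributed number k of times, collecting the multiset of samples) and sampling without replacement the same Binomial(n,p)-distributed number of times have total variation distance at most p(1−p) + np², as distributions on subsets/multisets of the ground set. -/

import Mathlib

open scoped ENNReal

/-- Total variation distance between two p.m.f.s on a countable space (real valued). -/
noncomputable def tvPMF {α : Type*} (μ ν : PMF α) : ℝ :=
  (∑' x, |(μ x).toReal - (ν x).toReal|) / 2

/-- Sampling with replacement: `k` independent uniform draws from `Fin n`, collected as a
multiset. -/
noncomputable def withRep (n : ℕ) (hn : 0 < n) (k : ℕ) : PMF (Multiset (Fin n)) :=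
  haveI : Nonempty (Fin n) := ⟨⟨0, hn⟩⟩
  (PMF.uniformOfFintype (Fin k → Fin n)).map
    (fun f => ((List.ofFn f : List (Fin n)) : Multiset (Fin n)))

/-- Sampling without replacement: a uniformly random `k`-subset of `Fin n`, as a multiset. -/
noncomputable def withoutRep (n : ℕ) (k : ℕ) (hk : k ≤ n) : PMF (Multiset (Fin n)) :=
  (PMF.uniformOfFinset
    ((Finset.univ : Finset (Finset (Fin n))).filter (fun t => t.card = k))
    (by
      obtain ⟨t, _, ht⟩ := Finset.exists_subset_card_eq
        (s := (Finset.univ : Finset (Fin n))) (n := k) (by simpa using hk)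
      exact ⟨t, by simp [ht]⟩)).map (fun s => (s.val : Multiset (Fin n)))


open Finset

noncomputable def ediff {α : Type*} (μ ν : PMF α) : ℝ≥0∞ :=
  ∑' x, ((μ x - ν x) + (ν x - μ x))

lemma abs_toReal_sub (a b : ℝ≥0∞) (ha : a ≠ ∞) (hb : b ≠ ∞) :
    |a.toReal - b.toReal| = ((a - b) + (b - a)).toReal := by
  rcases le_total a b with h | h
  · rw [tsub_eq_zero_of_le h, zero_add, abs_sub_comm,
      abs_of_nonneg (sub_nonneg.2 (ENNReal.toReal_mono hb h)),
      ENNReal.toReal_sub_of_le h hb]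
  · rw [tsub_eq_zero_of_le h, add_zero,
      abs_of_nonneg (sub_nonneg.2 (ENNReal.toReal_mono ha h)),
      ENNReal.toReal_sub_of_le h ha]

lemma tvPMF_eq_ediff {α : Type*} (μ ν : PMF α) :
    tvPMF μ ν = (ediff μ ν).toReal / 2 := by
  unfold tvPMF ediff
  rw [ENNReal.tsum_toReal_eq fun x => by
    exact ENNReal.add_ne_top.2 ⟨ne_top_of_le_ne_top (μ.apply_ne_top x) tsub_le_self,
      ne_top_of_le_ne_top (ν.apply_ne_top x) tsub_le_self⟩]
  congr 1
  exact tsum_congr fun x => abs_toReal_sub _ _ (μ.apply_ne_top x) (ν.apply_ne_top x)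

lemma ediff_bind_le {α β : Type*} (p : PMF α) (f g : α → PMF β) :
    ediff (p.bind f) (p.bind g) ≤ ∑' a, p a * ediff (f a) (g a) := by
  unfold ediff
  have : ∀ a : α, p a * ∑' x, ((f a x - g a x) + (g a x - f a x))
      = ∑' x : β, p a * ((f a x - g a x) + (g a x - f a x)) :=
    fun a => (ENNReal.tsum_mul_left).symm
  rw [tsum_congr this, ENNReal.tsum_comm]
  refine ENNReal.tsum_le_tsum fun x => ?_
  have hsub : ∀ (u v : α → ℝ≥0∞), (∑' a, u a) - (∑' a, v a) ≤ ∑' a, (u a - v a) := by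
    intro u v
    rw [tsub_le_iff_right, ← ENNReal.tsum_add]
    exact ENNReal.tsum_le_tsum fun a => le_tsub_add
  rw [PMF.bind_apply, PMF.bind_apply]
  calc (∑' a, p a * f a x) - (∑' a, p a * g a x) + ((∑' a, p a * g a x) - (∑' a, p a * f a x))
      ≤ (∑' a, (p a * f a x - p a * g a x)) + ∑' a, (p a * g a x - p a * f a x) :=
        add_le_add (hsub _ _) (hsub _ _)
    _ = ∑' a, ((p a * f a x - p a * g a x) + (p a * g a x - p a * f a x)) :=
        (ENNReal.tsum_add).symm
    _ = ∑' a, p a * ((f a x - g a x) + (g a x - f a x)) := by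
        refine tsum_congr fun a => ?_
        rw [mul_add, ENNReal.mul_sub fun _ _ => p.apply_ne_top a,
          ENNReal.mul_sub fun _ _ => p.apply_ne_top a]


lemma card_eqpair_le (n k : ℕ) (i j : Fin k) (hij : i ≠ j) :
    (univ.filter fun f : Fin k → Fin n => f i = f j).card ≤ n ^ (k - 1) := by
  match k with
  | 0 => exact absurd (Subsingleton.elim i j) hij
  | k + 1 =>
    have : (univ.filter fun f : Fin (k+1) → Fin n => f i = f j).card
        ≤ (univ : Finset (Fin k → Fin n)).card := by
      refine Finset.card_le_card_of_injOn (fun f => f ∘ j.succAbove)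
        (fun f _ => Finset.mem_univ _) ?_
      intro f hf g hg h
      simp only [coe_filter, Set.mem_setOf_eq, mem_univ, true_and] at hf hg
      funext x
      rcases eq_or_ne x j with rfl | hx
      · obtain ⟨y, hy⟩ := Fin.exists_succAbove_eq hij
        calc f x = f i := hf.symm
          _ = f (x.succAbove y) := by rw [hy]
          _ = g (x.succAbove y) := congrFun h y
          _ = g i := by rw [hy]
          _ = g x := hg
      · obtain ⟨y, hy⟩ := Fin.exists_succAbove_eq hx
        rw [← hy]; exact congrFun h y
    simpa [Fintype.card_fun] using this

lemma card_noninj_le (n k : ℕ) :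
    (univ.filter fun f : Fin k → Fin n => ¬ Function.Injective f).card
      ≤ k * (k - 1) * n ^ (k - 1) := by
  classical
  have hsub : (univ.filter fun f : Fin k → Fin n => ¬ Function.Injective f)
      ⊆ (univ : Finset (Fin k)).offDiag.biUnion
        (fun p => univ.filter fun f : Fin k → Fin n => f p.1 = f p.2) := by
    intro f hf
    rw [Finset.mem_filter] at hf
    obtain ⟨a, b, hab, hne⟩ := Function.not_injective_iff.1 hf.2
    exact Finset.mem_biUnion.2 ⟨(a, b), by simp [Finset.mem_offDiag, hne],
      by simp [hab]⟩
  calc (univ.filter fun f : Fin k → Fin n => ¬ Function.Injective f).card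
      ≤ _ := Finset.card_le_card hsub
    _ ≤ ∑ p ∈ (univ : Finset (Fin k)).offDiag,
          (univ.filter fun f : Fin k → Fin n => f p.1 = f p.2).card :=
        Finset.card_biUnion_le
    _ ≤ ∑ _p ∈ (univ : Finset (Fin k)).offDiag, n ^ (k - 1) := by
        refine Finset.sum_le_sum fun p hp => ?_
        exact card_eqpair_le n k p.1 p.2 (Finset.mem_offDiag.1 hp).2.2
    _ = (k * k - k) * n ^ (k - 1) := by
        rw [Finset.sum_const, smul_eq_mul, Finset.offDiag_card, Finset.card_univ,
          Fintype.card_fin]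
    _ = k * (k - 1) * n ^ (k - 1) := by
        congr 1
        rw [Nat.mul_sub, mul_one]

lemma card_fiber_le (n k : ℕ) (t : Finset (Fin n)) (ht : t.card = k) :
    (univ.filter fun f : Fin k → Fin n =>
        (t.val : Multiset (Fin n)) = ↑(List.ofFn f)).card ≤ k.factorial := by
  classical
  rw [← Fintype.card_subtype]
  have hmem : ∀ (f : Fin k → Fin n), (t.val : Multiset (Fin n)) = ↑(List.ofFn f) →
      ∀ x, f x ∈ t := by
    intro f hf x
    have : f x ∈ List.ofFn f := List.mem_ofFn.2 ⟨x, rfl⟩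
    have : f x ∈ (↑(List.ofFn f) : Multiset (Fin n)) := Multiset.mem_coe.2 this
    rw [← hf] at this
    exact this
  have hinj : ∀ (f : Fin k → Fin n), (t.val : Multiset (Fin n)) = ↑(List.ofFn f) →
      Function.Injective f := by
    intro f hf
    have : (↑(List.ofFn f) : Multiset (Fin n)).Nodup := hf ▸ t.nodup
    exact List.nodup_ofFn.1 (Multiset.coe_nodup.1 this)
  have : Fintype.card {f : Fin k → Fin n // (t.val : Multiset (Fin n)) = ↑(List.ofFn f)}
      ≤ Fintype.card (Fin k ↪ {x // x ∈ t}) := by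
    refine Fintype.card_le_of_injective
      (fun F => ⟨fun x => ⟨F.1 x, hmem F.1 F.2 x⟩,
        fun a b h => hinj F.1 F.2 (congrArg Subtype.val h)⟩) ?_
    intro F G h
    apply Subtype.ext
    funext x
    have := congrFun (congrArg (fun (e : Fin k ↪ {x // x ∈ t}) => (e : Fin k → {x // x ∈ t})) h) x
    exact congrArg Subtype.val this
  calc _ ≤ Fintype.card (Fin k ↪ {x // x ∈ t}) := this
    _ = k.factorial := by
        rw [Fintype.card_embedding_eq, Fintype.card_coe, ht, Fintype.card_fin,
          Nat.descFactorial_self]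

lemma tsum_ite_card {α : Type*} [Fintype α] (P : α → Prop) [DecidablePred P] (c : ℝ≥0∞) :
    ∑' a : α, (if P a then c else 0) = ((univ.filter P).card : ℝ≥0∞) * c := by
  rw [tsum_fintype, ← Finset.sum_filter, Finset.sum_const, nsmul_eq_mul]

lemma key_le (n : ℕ) (hn : 0 < n) (k : ℕ) (hk : k ≤ n) :
    ediff (withRep n hn k) (withoutRep n k hk)
      ≤ 2 * ((k * (k - 1) : ℕ) : ℝ≥0∞) * (n : ℝ≥0∞)⁻¹ := by
  classical
  haveI : Nonempty (Fin n) := ⟨⟨0, hn⟩⟩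
  set μ := withRep n hn k with hμdef
  set ν := withoutRep n k hk with hνdef
  set c : ℝ≥0∞ := ((n : ℝ≥0∞) ^ k)⁻¹ with hc
  have hnk0 : ((n : ℝ≥0∞) ^ k) ≠ 0 := pow_ne_zero _ (by exact_mod_cast hn.ne')
  have hnktop : ((n : ℝ≥0∞) ^ k) ≠ ∞ := ENNReal.pow_ne_top (ENNReal.natCast_ne_top n)
  have hcard : ((Fintype.card (Fin k → Fin n) : ℝ≥0∞)) = (n : ℝ≥0∞) ^ k := by
    rw [Fintype.card_fun, Fintype.card_fin, Fintype.card_fin, Nat.cast_pow]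
  -- formula for μ
  have hμt : ∀ s, μ s = ∑' f : Fin k → Fin n,
      (if s = ((List.ofFn f : List (Fin n)) : Multiset (Fin n)) then c else 0) := by
    intro s
    rw [hμdef, withRep, PMF.map_apply]
    refine tsum_congr fun f => ?_
    split_ifs with h
    · rw [PMF.uniformOfFintype_apply, hcard]
    · rfl
  have hμ : ∀ s, μ s = (((univ.filter fun f : Fin k → Fin n =>
      s = ((List.ofFn f : List (Fin n)) : Multiset (Fin n))).card : ℕ) : ℝ≥0∞) * c := by
    intro s; rw [hμt s, tsum_ite_card]
  -- the support predicate
  set D : Multiset (Fin n) → Prop := fun s => ∃ t : Finset (Fin n), t.card = k ∧ s = t.val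
    with hD
  set T : Finset (Finset (Fin n)) :=
    (Finset.univ : Finset (Finset (Fin n))).filter (fun t => t.card = k) with hT
  have hTcard : (T.card : ℕ) = n.choose k := by
    have : T = Finset.powersetCard k (univ : Finset (Fin n)) := by
      rw [Finset.powersetCard_eq_filter, Finset.powerset_univ]
    rw [this, Finset.card_powersetCard, Finset.card_univ, Fintype.card_fin]
  set d : ℝ≥0∞ := ((n.choose k : ℕ) : ℝ≥0∞)⁻¹ with hd
  have hνt : ∀ s, ν s = ∑' t : Finset (Fin n),
      (if s = t.val ∧ t.card = k then d else 0) := by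
    intro s
    rw [hνdef, withoutRep, PMF.map_apply]
    refine tsum_congr fun t => ?_
    by_cases h1 : s = t.val
    · by_cases h2 : t.card = k
      · have htT : t ∈ T := by rw [hT]; exact Finset.mem_filter.2 ⟨Finset.mem_univ _, h2⟩
        rw [if_pos h1, if_pos ⟨h1, h2⟩, PMF.uniformOfFinset_apply, if_pos htT, hTcard]
      · have htT : t ∉ T := by rw [hT]; simp [Finset.mem_filter, h2]
        rw [if_pos h1, if_neg (fun hh => h2 hh.2), PMF.uniformOfFinset_apply, if_neg htT]
    · rw [if_neg h1, if_neg (fun hh => h1 hh.1)]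
  have hν0 : ∀ s, ¬ D s → ν s = 0 := by
    intro s hs
    rw [hνt s]
    refine ENNReal.tsum_eq_zero.2 fun t => ?_
    rw [if_neg]
    rintro ⟨h1, h2⟩
    exact hs ⟨t, h2, h1⟩
  have hνval : ∀ t : Finset (Fin n), t.card = k → ν t.val = d := by
    intro t ht
    rw [hνt]
    have : (fun t' : Finset (Fin n) => if (t.val : Multiset (Fin n)) = t'.val ∧ t'.card = k
        then d else 0) = fun t' => if t' = t then d else 0 := by
      funext t'
      by_cases h : t' = t
      · subst h; simp [ht]
      · rw [if_neg h, if_neg]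
        rintro ⟨hv, -⟩
        exact h (Finset.val_inj.1 hv.symm)
    rw [this, tsum_ite_eq]
  -- μ ≤ ν on the support
  have hμν : ∀ t : Finset (Fin n), t.card = k → μ t.val ≤ ν t.val := by
    intro t ht
    rw [hνval t ht, hμ]
    have hnat : ((univ.filter fun f : Fin k → Fin n =>
        (t.val : Multiset (Fin n)) = ↑(List.ofFn f)).card) * n.choose k ≤ n ^ k := by
      calc _ ≤ k.factorial * n.choose k :=
            Nat.mul_le_mul_right _ (card_fiber_le n k t ht)
        _ = n.descFactorial k := (Nat.descFactorial_eq_factorial_mul_choose n k).symm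
        _ ≤ n ^ k := Nat.descFactorial_le_pow n k
    rw [hd, ENNReal.le_inv_iff_mul_le]
    calc ((univ.filter fun f : Fin k → Fin n =>
            (t.val : Multiset (Fin n)) = ↑(List.ofFn f)).card : ℝ≥0∞) * c * (n.choose k : ℕ)
        = (((univ.filter fun f : Fin k → Fin n =>
            (t.val : Multiset (Fin n)) = ↑(List.ofFn f)).card) * n.choose k : ℕ) * c := by
          push_cast; ring
      _ ≤ ((n ^ k : ℕ) : ℝ≥0∞) * c := mul_le_mul_left (by exact_mod_cast hnat) c
      _ = 1 := by rw [Nat.cast_pow, hc, ENNReal.mul_inv_cancel hnk0 hnktop]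
  -- the mass of the support under μ
  set I : Finset (Fin k → Fin n) := univ.filter fun f => Function.Injective f with hI
  set m : ℝ≥0∞ := ∑' s, (if D s then μ s else 0) with hm
  have hmI : (I.card : ℝ≥0∞) * c ≤ m := by
    have h1 : ∀ s, (if D s then μ s else 0)
        = ∑' f : Fin k → Fin n, (if D s then
            (if s = ((List.ofFn f : List (Fin n)) : Multiset (Fin n)) then c else 0) else 0) := by
      intro s
      split_ifs with h
      · exact hμt s
      · exact tsum_zero.symm
    rw [hm, tsum_congr h1, ENNReal.tsum_comm]
    have h2 : ∀ f : Fin k → Fin n,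
        (∑' s, (if D s then
          (if s = ((List.ofFn f : List (Fin n)) : Multiset (Fin n)) then c else 0) else 0))
        = (if D ((List.ofFn f : List (Fin n)) : Multiset (Fin n)) then c else 0) := by
      intro f
      have : (fun s => if D s then
          (if s = ((List.ofFn f : List (Fin n)) : Multiset (Fin n)) then c else 0) else 0)
          = fun s => if s = ((List.ofFn f : List (Fin n)) : Multiset (Fin n)) then
              (if D ((List.ofFn f : List (Fin n)) : Multiset (Fin n)) then c else 0) else 0 := by
        funext s
        by_cases h : s = ((List.ofFn f : List (Fin n)) : Multiset (Fin n))
        · subst h; split_ifs <;> rfl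
        · simp [h]
      rw [this, tsum_ite_eq]
    rw [tsum_congr h2, ← tsum_ite_card (fun f : Fin k → Fin n => Function.Injective f) c]
    refine ENNReal.tsum_le_tsum fun f => ?_
    split_ifs with h1 h2
    · exact le_rfl
    · exact absurd ⟨⟨(List.ofFn f : List (Fin n)), Multiset.coe_nodup.2 (List.nodup_ofFn.2 h1)⟩,
        by simp [List.length_ofFn], rfl⟩ h2
    · exact zero_le
    · exact zero_le
  -- the key identity
  have hkey : ediff μ ν + 2 * m = 2 := by
    have pt : ∀ s, ((μ s - ν s) + (ν s - μ s)) + 2 * (if D s then μ s else 0)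
        = μ s + ν s := by
      intro s
      by_cases h : D s
      · obtain ⟨t, ht, rfl⟩ := h
        have hle := hμν t ht
        rw [if_pos ⟨t, ht, rfl⟩, tsub_eq_zero_of_le hle, zero_add, two_mul, ← add_assoc,
          tsub_add_cancel_of_le hle, add_comm]
      · rw [if_neg h, hν0 s h]; simp [zero_tsub]
    calc ediff μ ν + 2 * m
        = ∑' s, (((μ s - ν s) + (ν s - μ s)) + 2 * (if D s then μ s else 0)) := by
          rw [ediff, hm, ← ENNReal.tsum_mul_left, ← ENNReal.tsum_add]
      _ = ∑' s, (μ s + ν s) := tsum_congr pt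
      _ = 2 := by rw [ENNReal.tsum_add, PMF.tsum_coe, PMF.tsum_coe]; norm_num
  have h2m : 2 * m ≠ ∞ := by
    have : 2 * m ≤ 2 := by
      calc 2 * m ≤ ediff μ ν + 2 * m := le_add_self
        _ = 2 := hkey
    exact ne_top_of_le_ne_top (by norm_num) this
  have hE : ediff μ ν = 2 - 2 * m := ENNReal.eq_sub_of_add_eq h2m hkey
  set N : Finset (Fin k → Fin n) := univ.filter fun f => ¬ Function.Injective f with hN
  have hIN : (I.card : ℝ≥0∞) * c + (N.card : ℝ≥0∞) * c = 1 := by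
    rw [← add_mul, ← Nat.cast_add, hI, hN,
      Finset.card_filter_add_card_filter_not, Finset.card_univ, hcard, hc,
      ENNReal.mul_inv_cancel hnk0 hnktop]
  have hIc_ne : 2 * ((I.card : ℝ≥0∞) * c) ≠ ∞ := by
    refine ENNReal.mul_ne_top (by norm_num) (ENNReal.mul_ne_top (ENNReal.natCast_ne_top _) ?_)
    exact ENNReal.inv_ne_top.2 hnk0
  have hstep : ediff μ ν ≤ 2 * ((N.card : ℝ≥0∞) * c) := by
    rw [hE]
    calc 2 - 2 * m ≤ 2 - 2 * ((I.card : ℝ≥0∞) * c) :=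
          tsub_le_tsub_left (mul_le_mul_right hmI 2) 2
      _ = 2 * ((N.card : ℝ≥0∞) * c) := by
          refine (ENNReal.eq_sub_of_add_eq hIc_ne ?_).symm
          rw [← mul_add, add_comm ((N.card : ℝ≥0∞) * c), hIN, mul_one]
  refine hstep.trans ?_
  have hNle : (N.card : ℝ≥0∞) ≤ ((k * (k - 1) * n ^ (k - 1) : ℕ) : ℝ≥0∞) := by
    exact_mod_cast card_noninj_le n k
  calc 2 * ((N.card : ℝ≥0∞) * c)
      ≤ 2 * (((k * (k - 1) * n ^ (k - 1) : ℕ) : ℝ≥0∞) * c) :=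
        mul_le_mul_right (mul_le_mul_left hNle c) 2
    _ ≤ 2 * ((k * (k - 1) : ℕ) : ℝ≥0∞) * (n : ℝ≥0∞)⁻¹ := by
        rcases Nat.eq_zero_or_pos k with rfl | hkpos
        · simp
        · have hksucc : k - 1 + 1 = k := Nat.succ_pred_eq_of_pos hkpos
          have hpk0 : ((n : ℝ≥0∞) ^ (k - 1)) ≠ 0 := pow_ne_zero _ (by exact_mod_cast hn.ne')
          have hpktop : ((n : ℝ≥0∞) ^ (k - 1)) ≠ ∞ :=
            ENNReal.pow_ne_top (ENNReal.natCast_ne_top n)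
          have hpow : ((n : ℝ≥0∞) ^ k)⁻¹ = ((n : ℝ≥0∞) ^ (k - 1))⁻¹ * (n : ℝ≥0∞)⁻¹ := by
            conv_lhs => rw [← hksucc]
            rw [pow_succ, ENNReal.mul_inv (Or.inl hpk0) (Or.inl hpktop)]
          refine le_of_eq ?_
          calc 2 * (((k * (k - 1) * n ^ (k - 1) : ℕ) : ℝ≥0∞) * c)
              = 2 * (((k * (k - 1) : ℕ) : ℝ≥0∞))
                  * ((↑n : ℝ≥0∞) ^ (k - 1) * (((↑n : ℝ≥0∞) ^ (k - 1))⁻¹)) * (↑n : ℝ≥0∞)⁻¹ := by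
                rw [hc, hpow]; push_cast; ring
            _ = 2 * (((k * (k - 1) : ℕ) : ℝ≥0∞)) * (↑n : ℝ≥0∞)⁻¹ := by
                rw [ENNReal.mul_inv_cancel hpk0 hpktop, mul_one]


lemma toNN_le_one (p : ℝ≥0∞) (hp : p ≤ 1) : p.toNNReal ≤ 1 := by
  simpa using ENNReal.toNNReal_mono ENNReal.one_ne_top hp

lemma binomial_apply_nat (p : ℝ≥0∞) (hp : p ≤ 1) (n : ℕ) (i : Fin (n + 1)) :
    PMF.binomial p.toNNReal (toNN_le_one p hp) n i = p ^ (i : ℕ) * (1 - p) ^ (n - (i : ℕ)) * ((n.choose i : ℕ) : ℝ≥0∞) := by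
  rw [PMF.binomial_apply, Fin.val_last]
  push_cast [ENNReal.coe_sub, ENNReal.coe_toNNReal (ne_top_of_le_ne_top ENNReal.one_ne_top hp)]
  rfl

lemma binom_sq (n : ℕ) (p : ℝ≥0∞) (hp : p ≤ 1) :
    (∑' k : Fin (n + 1), PMF.binomial p.toNNReal (toNN_le_one p hp) n k * (((k : ℕ) * ((k : ℕ) - 1) : ℕ) : ℝ≥0∞))
      ≤ (n : ℝ≥0∞) * (n : ℝ≥0∞) * p ^ 2 := by
  rw [tsum_fintype]
  match n with
  | 0 => simp [Fin.sum_univ_succ]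
  | 1 => simp [Fin.sum_univ_succ]
  | (m + 2) =>
    set g : ℕ → ℝ≥0∞ := fun k =>
      p ^ k * (1 - p) ^ (m + 2 - k) * (((m + 2).choose k : ℕ) : ℝ≥0∞)
        * ((k * (k - 1) : ℕ) : ℝ≥0∞) with hg
    have hone : ∑ k ∈ Finset.range (m + 1),
        (p ^ k * (1 - p) ^ (m - k) * ((m.choose k : ℕ) : ℝ≥0∞)) = 1 := by
      have h := (PMF.binomial p.toNNReal (toNN_le_one p hp) m).tsum_coe
      rw [tsum_fintype] at h
      calc ∑ k ∈ Finset.range (m + 1), (p ^ k * (1 - p) ^ (m - k) * ((m.choose k : ℕ) : ℝ≥0∞))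
          = ∑ i : Fin (m + 1),
            (fun k => p ^ k * (1 - p) ^ (m - k) * ((m.choose k : ℕ) : ℝ≥0∞)) ↑i :=
            (Fin.sum_univ_eq_sum_range _ _).symm
        _ = ∑ i : Fin (m + 1), PMF.binomial p.toNNReal (toNN_le_one p hp) m i :=
            Finset.sum_congr rfl fun i _ => (binomial_apply_nat p hp m i).symm
        _ = 1 := h
    have hch : ∀ k : ℕ, (m + 2).choose (k + 2) * ((k + 2) * (k + 1))
        = (m + 2) * (m + 1) * m.choose k := by
      intro k
      have h1 := Nat.add_one_mul_choose_eq (m + 1) (k + 1)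
      have h2 := Nat.add_one_mul_choose_eq m k
      rw [show m + 1 + 1 = m + 2 from rfl, show k + 1 + 1 = k + 2 from rfl] at h1
      calc (m + 2).choose (k + 2) * ((k + 2) * (k + 1))
          = ((m + 2).choose (k + 2) * (k + 2)) * (k + 1) := by ring
        _ = ((m + 2) * (m + 1).choose (k + 1)) * (k + 1) := by rw [← h1]
        _ = (m + 2) * ((m + 1).choose (k + 1) * (k + 1)) := by ring
        _ = (m + 2) * ((m + 1) * m.choose k) := by rw [← h2]
        _ = (m + 2) * (m + 1) * m.choose k := by ring
    calc ∑ i : Fin (m + 2 + 1),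
          PMF.binomial p.toNNReal (toNN_le_one p hp) (m + 2) i * (((i : ℕ) * ((i : ℕ) - 1) : ℕ) : ℝ≥0∞)
        = ∑ i : Fin (m + 2 + 1), g ↑i := by
          refine Finset.sum_congr rfl fun i _ => ?_
          rw [hg, binomial_apply_nat p hp]
      _ = ∑ k ∈ Finset.range (m + 2 + 1), g k := Fin.sum_univ_eq_sum_range g (m + 2 + 1)
      _ = ∑ k ∈ Finset.range (m + 2), g (k + 1) + g 0 := Finset.sum_range_succ' g (m + 2)
      _ = (∑ k ∈ Finset.range (m + 1), g (k + 1 + 1) + g 1) + g 0 := by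
          rw [Finset.sum_range_succ' (fun k => g (k + 1)) (m + 1)]
      _ = ∑ k ∈ Finset.range (m + 1), g (k + 2) := by
          have h0 : g 0 = 0 := by simp [hg]
          have h1 : g 1 = 0 := by simp [hg]
          rw [h0, h1, add_zero, add_zero]
      _ = ∑ k ∈ Finset.range (m + 1), (((m + 2) * (m + 1) : ℕ) : ℝ≥0∞) * p ^ 2
            * (p ^ k * (1 - p) ^ (m - k) * ((m.choose k : ℕ) : ℝ≥0∞)) := by
          refine Finset.sum_congr rfl fun k _ => ?_
          rw [hg]
          have he : m + 2 - (k + 2) = m - k := by omega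
          have hcast : (((m + 2).choose (k + 2) : ℕ) : ℝ≥0∞) * (((k + 2) * (k + 2 - 1) : ℕ) : ℝ≥0∞)
              = (((m + 2) * (m + 1) : ℕ) : ℝ≥0∞) * ((m.choose k : ℕ) : ℝ≥0∞) := by
            rw [← Nat.cast_mul, ← Nat.cast_mul]
            congr 1
            have : k + 2 - 1 = k + 1 := by omega
            rw [this, hch k]
          calc p ^ (k + 2) * (1 - p) ^ (m + 2 - (k + 2)) * (((m + 2).choose (k + 2) : ℕ) : ℝ≥0∞)
                * (((k + 2) * (k + 2 - 1) : ℕ) : ℝ≥0∞)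
              = (1 - p) ^ (m - k) * p ^ (k + 2) *
                ((((m + 2).choose (k + 2) : ℕ) : ℝ≥0∞) * (((k + 2) * (k + 2 - 1) : ℕ) : ℝ≥0∞)) := by
                rw [he]; ring
            _ = (1 - p) ^ (m - k) * p ^ (k + 2) *
                ((((m + 2) * (m + 1) : ℕ) : ℝ≥0∞) * ((m.choose k : ℕ) : ℝ≥0∞)) := by rw [hcast]
            _ = (((m + 2) * (m + 1) : ℕ) : ℝ≥0∞) * p ^ 2
                * (p ^ k * (1 - p) ^ (m - k) * ((m.choose k : ℕ) : ℝ≥0∞)) := by ring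
      _ = (((m + 2) * (m + 1) : ℕ) : ℝ≥0∞) * p ^ 2 := by
          rw [← Finset.mul_sum, hone, mul_one]
      _ ≤ ((m + 2 : ℕ) : ℝ≥0∞) * ((m + 2 : ℕ) : ℝ≥0∞) * p ^ 2 := by
          refine mul_le_mul_left ?_ _
          rw [← Nat.cast_mul]
          exact_mod_cast Nat.mul_le_mul_left (m + 2) (by omega)


/-- Drawing a `Binomial(n,p)` number of samples with replacement versus without replacement
from `[n]` gives distributions (on multisets) within total variation `p(1−p) + np²`. -/
theorem stmt9 (n : ℕ) (hn : 0 < n) (p : ℝ≥0∞) (hp : p ≤ 1) :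
    tvPMF
      ((PMF.binomial p.toNNReal (by simpa using ENNReal.toNNReal_mono ENNReal.one_ne_top hp) n).bind (fun k => withRep n hn (k : ℕ)))
      ((PMF.binomial p.toNNReal (by simpa using ENNReal.toNNReal_mono ENNReal.one_ne_top hp) n).bind
        (fun k => withoutRep n (k : ℕ) (Nat.lt_succ_iff.mp k.isLt)))
      ≤ p.toReal * (1 - p.toReal) + (n : ℝ) * p.toReal ^ 2 := by
  classical
  have hn0 : (n : ℝ≥0∞) ≠ 0 := Nat.cast_ne_zero.2 hn.ne'
  have hntop : (n : ℝ≥0∞) ≠ ∞ := ENNReal.natCast_ne_top n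
  have hptop : p ≠ ∞ := ne_top_of_le_ne_top (by norm_num) hp
  rw [tvPMF_eq_ediff]
  have h1 := ediff_bind_le (PMF.binomial p.toNNReal (toNN_le_one p hp) n)
      (fun k : Fin (n + 1) => withRep n hn (k : ℕ))
      (fun k : Fin (n + 1) => withoutRep n (k : ℕ) (Nat.lt_succ_iff.mp k.isLt))
  have h2 : (∑' k : Fin (n + 1), PMF.binomial p.toNNReal (toNN_le_one p hp) n k
        * ediff (withRep n hn (k : ℕ)) (withoutRep n (k : ℕ) (Nat.lt_succ_iff.mp k.isLt)))
      ≤ ∑' k : Fin (n + 1), PMF.binomial p.toNNReal (toNN_le_one p hp) n k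
        * (2 * (((k : ℕ) * ((k : ℕ) - 1) : ℕ) : ℝ≥0∞) * (n : ℝ≥0∞)⁻¹) :=
    ENNReal.tsum_le_tsum fun k =>
      mul_le_mul_right (key_le n hn (k : ℕ) (Nat.lt_succ_iff.mp k.isLt)) _
  have h3 : (∑' k : Fin (n + 1), PMF.binomial p.toNNReal (toNN_le_one p hp) n k
        * (2 * (((k : ℕ) * ((k : ℕ) - 1) : ℕ) : ℝ≥0∞) * (n : ℝ≥0∞)⁻¹))
      = 2 * (n : ℝ≥0∞)⁻¹ * ∑' k : Fin (n + 1), PMF.binomial p.toNNReal (toNN_le_one p hp) n k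
          * (((k : ℕ) * ((k : ℕ) - 1) : ℕ) : ℝ≥0∞) := by
    rw [← ENNReal.tsum_mul_left]
    exact tsum_congr fun k => by ring
  have h4 := binom_sq n p hp
  have h5 : ediff ((PMF.binomial p.toNNReal (toNN_le_one p hp) n).bind (fun k => withRep n hn (k : ℕ)))
      ((PMF.binomial p.toNNReal (toNN_le_one p hp) n).bind
        (fun k => withoutRep n (k : ℕ) (Nat.lt_succ_iff.mp k.isLt)))
      ≤ 2 * ((n : ℝ≥0∞) * p ^ 2) := by
    refine h1.trans (h2.trans ?_)
    rw [h3]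
    calc 2 * (n : ℝ≥0∞)⁻¹ * ∑' k : Fin (n + 1), PMF.binomial p.toNNReal (toNN_le_one p hp) n k
          * (((k : ℕ) * ((k : ℕ) - 1) : ℕ) : ℝ≥0∞)
        ≤ 2 * (n : ℝ≥0∞)⁻¹ * ((n : ℝ≥0∞) * (n : ℝ≥0∞) * p ^ 2) := mul_le_mul_right h4 _
      _ = ((n : ℝ≥0∞)⁻¹ * (n : ℝ≥0∞)) * (2 * ((n : ℝ≥0∞) * p ^ 2)) := by ring
      _ = 2 * ((n : ℝ≥0∞) * p ^ 2) := by
          rw [ENNReal.inv_mul_cancel hn0 hntop, one_mul]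
  have hfin : 2 * ((n : ℝ≥0∞) * p ^ 2) ≠ ∞ :=
    ENNReal.mul_ne_top (by norm_num) (ENNReal.mul_ne_top hntop (ENNReal.pow_ne_top hptop))
  have h6 := ENNReal.toReal_mono hfin h5
  rw [ENNReal.toReal_mul, ENNReal.toReal_mul, ENNReal.toReal_pow, ENNReal.toReal_ofNat, ENNReal.toReal_natCast] at h6
  have hpt1 : p.toReal ≤ 1 := by
    have := ENNReal.toReal_mono (by norm_num : (1 : ℝ≥0∞) ≠ ∞) hp
    simpa using this
  have hpt0 : (0 : ℝ) ≤ p.toReal := ENNReal.toReal_nonneg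
  have hnn : (0 : ℝ) ≤ p.toReal * (1 - p.toReal) :=
    mul_nonneg hpt0 (sub_nonneg.2 hpt1)
  linarith
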